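/- arXiv:1408.1428 — 2 statements merged into one kernel-verified Lean document; each statement's English description precedes it below -/
import Mathlib

section
/- Let f : [a,b] → ℝ and let p ≥ 1. For any tagged partition Π(ξ) of [a,b] (with tags ξ_i ∈ [x_{i-1}, x_i]), the step function f_{Π(ξ)} (defined by f_{Π(ξ)}(x_i) = f(x_i) at partition points and f_{Π(ξ)}(x) = f(ξ_i) for x ∈ (x_{i-1}, x_i)) satisfies ‖f_{Π(ξ)}‖_{[a,b],p} ≤ ‖f‖_{[a,b],p}, where ‖h‖_{[a,b],p}^p = sup over all partitions of [a,b] of the sum of |h(x_i) - h(x_{i-1})|^p. -/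
open Set
open scoped ENNReal

noncomputable section

/-- Rectangular increment of a two-variable function. -/
def rect (H : ℝ → ℝ → ℝ) (x x' y y' : ℝ) : ℝ :=
  H x' y' - H x y' - H x' y + H x y

/-- The `p`-variation (the `p`-th power of the seminorm) of `f` on `[a,b]`,
as an extended nonnegative real. -/
def pVarE (p a b : ℝ) (f : ℝ → ℝ) : ℝ≥0∞ :=
  ⨆ (n : ℕ) (t : Fin (n + 1) → ℝ) (_ : Monotone t) (_ : t 0 = a)
    (_ : t (Fin.last n) = b),
    ∑ i : Fin n, ENNReal.ofReal |f (t i.succ) - f (t i.castSucc)| ^ p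

/-- The `p`-variation seminorm `‖f‖_{[a,b],p}`. -/
def pVarNormE (p a b : ℝ) (f : ℝ → ℝ) : ℝ≥0∞ := pVarE p a b f ^ (1 / p)

/-- The first bivariation seminorm `‖F‖_{1;p}`. -/
def biVar1E (p a b c d : ℝ) (F : ℝ → ℝ → ℝ) : ℝ≥0∞ :=
  ⨆ (y₁ ∈ Icc c d) (y₂ ∈ Icc c d), pVarNormE p a b (fun x => F x y₁ - F x y₂)

/-- The second bivariation seminorm `‖F‖_{2;q}`. -/
def biVar2E (q a b c d : ℝ) (F : ℝ → ℝ → ℝ) : ℝ≥0∞ :=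
  ⨆ (x₁ ∈ Icc a b) (x₂ ∈ Icc a b), pVarNormE q c d (fun y => F x₁ y - F x₂ y)

/-- The joint `p`-variation `V_p(F)` of a two-variable function. -/
def jointVarE (p a b c d : ℝ) (F : ℝ → ℝ → ℝ) : ℝ≥0∞ :=
  (⨆ (n : ℕ) (m : ℕ) (t : Fin (n + 1) → ℝ) (s : Fin (m + 1) → ℝ)
      (_ : Monotone t) (_ : t 0 = a) (_ : t (Fin.last n) = b)
      (_ : Monotone s) (_ : s 0 = c) (_ : s (Fin.last m) = d),
      ∑ i : Fin n, ∑ j : Fin m,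
        ENNReal.ofReal
          |rect F (t i.castSucc) (t i.succ) (s j.castSucc) (s j.succ)| ^ p) ^ (1 / p)

/-- the step function of `f` based on a tagged partition has
`p`-variation seminorm at most that of `f`. -/
theorem step_function_pvar_le
    (a b p : ℝ) (hab : a < b) (hp : 1 ≤ p)
    (f fP : ℝ → ℝ) (N : ℕ) (x : Fin (N + 1) → ℝ) (ξ : Fin N → ℝ)
    (hx : StrictMono x) (hx0 : x 0 = a) (hxN : x (Fin.last N) = b)
    (hξ : ∀ i : Fin N, x i.castSucc ≤ ξ i ∧ ξ i ≤ x i.succ)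
    (hstep₁ : ∀ i : Fin (N + 1), fP (x i) = f (x i))
    (hstep₂ : ∀ i : Fin N, ∀ z : ℝ, x i.castSucc < z → z < x i.succ → fP z = f (ξ i)) :
    pVarNormE p a b fP ≤ pVarNormE p a b f := by
  classical
  set P : ℝ → Fin N → Prop := fun z j => x j.castSucc < z ∧ z < x j.succ with hPdef
  have hsc : ∀ j j' : Fin N, j < j' → (j.succ : Fin (N+1)) ≤ j'.castSucc := by
    intro j j' h
    rw [Fin.le_def]; simp only [Fin.val_succ, Fin.coe_castSucc]
    exact h
  have Puniq : ∀ z (j j' : Fin N), P z j → P z j' → j = j' := by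
    intro z j j' hj hj'
    by_contra hne
    rcases lt_or_gt_of_ne hne with h | h
    · have := hx.monotone (hsc j j' h); linarith [hj.2, hj'.1]
    · have := hx.monotone (hsc j' j h); linarith [hj.1, hj'.2]
  set g : ℝ → ℝ := fun z => if h : ∃ j, P z j then ξ h.choose else z with hgdef
  have g_int : ∀ z (j : Fin N), P z j → g z = ξ j := by
    intro z j h
    have hex : ∃ j, P z j := ⟨j, h⟩
    simp only [hgdef, dif_pos hex]
    exact congrArg ξ (Puniq z _ _ hex.choose_spec h)
  have g_not : ∀ z, (¬ ∃ j, P z j) → g z = z := by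
    intro z h; simp only [hgdef, dif_neg h]
  have ga : g a = a := by
    apply g_not
    rintro ⟨j, hj1, hj2⟩
    have : a ≤ x j.castSucc := hx0 ▸ hx.monotone (Fin.zero_le _)
    linarith
  have gb : g b = b := by
    apply g_not
    rintro ⟨j, hj1, hj2⟩
    have : x j.succ ≤ b := hxN ▸ hx.monotone (Fin.le_last _)
    linarith
  have gmono : ∀ z z', z ≤ z' → g z ≤ g z' := by
    intro z z' hzz
    by_cases h1 : ∃ j, P z j
    · obtain ⟨j, hj⟩ := h1
      rw [g_int z j hj]
      by_cases h2 : ∃ j', P z' j'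
      · obtain ⟨j', hj'⟩ := h2
        rw [g_int z' j' hj']
        rcases lt_trichotomy j j' with h | h | h
        · have := hx.monotone (hsc j j' h)
          linarith [(hξ j).2, (hξ j').1]
        · rw [h]
        · exfalso
          have := hx.monotone (hsc j' j h)
          linarith [hj.1, hj'.2]
      · rw [g_not z' h2]
        rcases le_or_gt (x j.succ) z' with h | h
        · linarith [(hξ j).2]
        · exact absurd ⟨by linarith [hj.1], h⟩ (fun hh => h2 ⟨j, hh⟩)
    · rw [g_not z h1]
      by_cases h2 : ∃ j', P z' j'
      · obtain ⟨j', hj'⟩ := h2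
        rw [g_int z' j' hj']
        rcases le_or_gt z (x j'.castSucc) with h | h
        · linarith [(hξ j').1]
        · exact absurd ⟨h, by linarith [hj'.2]⟩ (fun hh => h1 ⟨j', hh⟩)
      · rw [g_not z' h2]; exact hzz
  have fP_eq : ∀ z, z ∈ Icc a b → fP z = f (g z) := by
    intro z hz
    by_cases h1 : ∃ j, P z j
    · obtain ⟨j, hj⟩ := h1
      rw [g_int z j hj]
      exact hstep₂ j z hj.1 hj.2
    · rw [g_not z h1]
      -- z is a partition point
      have : ∃ i, z = x i := by
        set S : Finset (Fin (N+1)) := Finset.univ.filter (fun i => x i ≤ z) with hS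
        have h0 : (0 : Fin (N+1)) ∈ S := by
          simp [hS]; rw [hx0]; exact hz.1
        have hne : S.Nonempty := ⟨0, h0⟩
        set i := S.max' hne with hi
        have hiS : i ∈ S := S.max'_mem hne
        have hxi : x i ≤ z := by simpa [hS] using hiS
        rcases eq_or_lt_of_le hxi with h | h
        · exact ⟨i, h.symm⟩
        · exfalso
          have hilt : i < Fin.last N := by
            rcases eq_or_lt_of_le (Fin.le_last i) with he | hl
            · exfalso; rw [he, hxN] at h; linarith [hz.2]
            · exact hl
          have hiv : (i : ℕ) < N := by
            have := hilt; rw [Fin.lt_def] at this; simpa using this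
          set j : Fin N := ⟨i, hiv⟩ with hj
          have hcs : j.castSucc = i := by ext; simp [hj]
          have hsucc : z < x j.succ := by
            by_contra hcon
            push_neg at hcon
            have : j.succ ∈ S := by simp [hS, hcon]
            have := S.le_max' _ this
            rw [← hi] at this
            have h2 : j.castSucc < j.succ := Fin.castSucc_lt_succ
            rw [hcs] at h2
            exact absurd this (not_le.mpr h2)
          exact h1 ⟨j, by rw [hcs]; exact h, hsucc⟩
      obtain ⟨i, rfl⟩ := this
      exact hstep₁ i
  -- main inequality on pVarE
  have main : pVarE p a b fP ≤ pVarE p a b f := by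
    refine iSup_le fun n => iSup_le fun t => iSup_le fun htm => iSup_le fun ht0 =>
      iSup_le fun htN => ?_
    have hmem : ∀ i, t i ∈ Icc a b := by
      intro i
      exact ⟨ht0 ▸ htm (Fin.zero_le _), htN ▸ htm (Fin.le_last _)⟩
    have hy : Monotone (g ∘ t) := fun i i' h => gmono _ _ (htm h)
    have hy0 : (g ∘ t) 0 = a := by simp [Function.comp, ht0, ga]
    have hyN : (g ∘ t) (Fin.last n) = b := by simp [Function.comp, htN, gb]
    refine le_trans (le_of_eq ?_) (le_iSup_of_le n (le_iSup_of_le (g ∘ t)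
      (le_iSup_of_le hy (le_iSup_of_le hy0 (le_iSup_of_le hyN le_rfl)))))
    refine Finset.sum_congr rfl fun i _ => ?_
    rw [fP_eq _ (hmem i.succ), fP_eq _ (hmem i.castSucc)]
    rfl
  exact ENNReal.rpow_le_rpow main (by positivity)
end
end

section
/- Let Π(ξ) = {x_0 = a < ... < x_N = b} be a finite set of points in [a,b]. Then there exists M ∈ ℕ and a sequence of partitions Π_0 ⊆ Π_1 ⊆ ... ⊆ Π_M of [a,b] with Π_0 = {a,b}, #Π_j = 2^j + 1, consecutive points of Π_j at distance less than 4·2^{-j}·(b−a) (after rescaling [a,b] to unit length: distance < 4·2^{-j} when b − a ≤ 1), each Π_{j+1} obtained from Π_j by inserting exactly one point in each subinterval of Π_j, and such that Π_M refines {x_0, ..., x_N}. -/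
set_option maxHeartbeats 1000000 in
/-- construction of a nested dyadically-refining sequence of
partitions `Π_0 ⊆ Π_1 ⊆ … ⊆ Π_M` of `[a,b]` (with `b - a ≤ 1` after rescaling),
with `#Π_j = 2^j + 1`, consecutive points at distance `< 4·2^{-j}`, one point
inserted in each subinterval at each step, and `Π_M` refining a given finite
set of points `{x_0, …, x_N}`. -/
theorem exists_nested_dyadic_refinement
    (a b : ℝ) (hab : a < b) (hba : b - a ≤ 1) (N : ℕ)
    (x : Fin (N + 1) → ℝ) (hx : StrictMono x) (hx0 : x 0 = a)
    (hxN : x (Fin.last N) = b) :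
    ∃ (M : ℕ) (P : ℕ → Finset ℝ),
      P 0 = {a, b} ∧
      (∀ j ≤ M, (P j).card = 2 ^ j + 1) ∧
      (∀ j ≤ M, ↑(P j) ⊆ Set.Icc a b ∧ a ∈ P j ∧ b ∈ P j) ∧
      (∀ j < M, P j ⊆ P (j + 1)) ∧
      (∀ j < M, ∀ u ∈ P j, ∀ v ∈ P j, u < v → (∀ w ∈ P j, w ∉ Set.Ioo u v) →
        ∃! w : ℝ, w ∈ P (j + 1) ∧ w ∈ Set.Ioo u v) ∧
      (∀ j ≤ M, ∀ u ∈ P j, ∀ v ∈ P j, u < v → (∀ w ∈ P j, w ∉ Set.Ioo u v) →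
        v - u < 4 / 2 ^ j) ∧
      (∀ i : Fin (N + 1), x i ∈ P M) := by
  classical
  have hab' : (0:ℝ) < b - a := sub_pos.mpr hab
  rcases N with _ | N
  · exfalso
    have : a = b := by rw [← hx0, ← hxN, Fin.last_zero]
    exact hab.ne this
  -- now x : Fin (N+2) → ℝ
  -- minimal gap
  set δ : ℝ := (Finset.univ : Finset (Fin (N+1))).inf' Finset.univ_nonempty
      (fun i => x i.succ - x i.castSucc) with hδdef
  have hδpos : 0 < δ := by
    rw [hδdef, Finset.lt_inf'_iff]
    exact fun i _ => sub_pos.mpr (hx (Fin.castSucc_lt_succ : i.castSucc < i.succ))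
  obtain ⟨M, hM⟩ : ∃ M : ℕ, (b - a) / δ < 2 ^ M :=
    pow_unbounded_of_one_lt _ one_lt_two
  set h : ℝ := (b - a) / 2 ^ M with hhdef
  have h2M : (0:ℝ) < 2 ^ M := pow_pos two_pos M
  have hh : 0 < h := div_pos hab' h2M
  have hhδ : h < δ := by
    rw [hhdef, div_lt_iff₀ h2M]
    have := (div_lt_iff₀ hδpos).mp hM
    nlinarith
  have hgap : ∀ i : Fin (N+1), h < x i.succ - x i.castSucc := fun i =>
    lt_of_lt_of_le hhδ (Finset.inf'_le _ (Finset.mem_univ i))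
  have hxa : ∀ i, a ≤ x i := fun i => hx0 ▸ hx.monotone (Fin.zero_le i)
  set k : Fin (N+2) → ℕ := fun i => ⌊(x i - a) / h⌋₊ with hkdef
  have hq0 : ∀ i, 0 ≤ (x i - a) / h := fun i =>
    div_nonneg (sub_nonneg.mpr (hxa i)) hh.le
  have hklb : ∀ i, a + k i * h ≤ x i := by
    intro i
    have := Nat.floor_le (hq0 i)
    rw [le_div_iff₀ hh] at this
    linarith
  have hkub : ∀ i, x i < a + (k i + 1) * h := by
    intro i
    have := Nat.lt_floor_add_one ((x i - a) / h)
    rw [div_lt_iff₀ hh] at this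
    linarith
  have hkmono : StrictMono k := by
    have step : ∀ i : Fin (N+1), k i.castSucc < k i.succ := by
      intro i
      have h1 : (k i.castSucc : ℝ) ≤ (x i.castSucc - a) / h := Nat.floor_le (hq0 _)
      have h2 : (x i.castSucc - a) / h + 1 < (x i.succ - a) / h := by
        rw [div_add' _ _ _ hh.ne', div_lt_div_iff₀ hh hh]
        nlinarith [hgap i]
      have : ((k i.castSucc + 1 : ℕ) : ℝ) ≤ (x i.succ - a) / h := by
        push_cast; linarith
      exact Nat.le_floor this
    exact Fin.strictMono_iff_lt_succ.mpr step
  set g : ℕ → ℝ := fun n => if hn : ∃ i, k i = n then x hn.choose else a + n * h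
    with hgdef
  have hg_spec : ∀ i, g (k i) = x i := by
    intro i
    have hn : ∃ i', k i' = k i := ⟨i, rfl⟩
    have : g (k i) = x hn.choose := dif_pos hn
    rw [this, hkmono.injective hn.choose_spec]
  have hglb : ∀ n : ℕ, a + n * h ≤ g n := by
    intro n
    simp only [hgdef]
    by_cases hn : ∃ i, k i = n
    · rw [dif_pos hn]
      have := hklb hn.choose
      rw [hn.choose_spec] at this
      exact this
    · rw [dif_neg hn]
  have hgub : ∀ n : ℕ, g n < a + (n + 1) * h := by
    intro n
    simp only [hgdef]
    by_cases hn : ∃ i, k i = n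
    · rw [dif_pos hn]
      have := hkub hn.choose
      rw [hn.choose_spec] at this
      linarith
    · rw [dif_neg hn]
      nlinarith
  have hgmono : StrictMono g := by
    intro m n hmn
    calc g m < a + (m + 1) * h := hgub m
      _ ≤ a + n * h := by
          have : ((m:ℝ) + 1) ≤ (n:ℝ) := by exact_mod_cast hmn
          nlinarith
      _ ≤ g n := hglb n
  have hk0 : k 0 = 0 := by
    rw [hkdef]
    simp [hx0]
  have hkN : k (Fin.last (N+1)) = 2 ^ M := by
    rw [hkdef]
    simp only [hxN]
    have e1 : (b - a) / h = 2 ^ M := by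
      rw [hhdef]; field_simp
    rw [e1, show ((2:ℝ)^M) = ((2^M : ℕ) : ℝ) by push_cast; ring, Nat.floor_natCast]
  have hg0 : g 0 = a := by rw [← hk0, hg_spec, hx0]
  have hgtop : g (2 ^ M) = b := by rw [← hkN, hg_spec, hxN]
  set P : ℕ → Finset ℝ := fun j => (Finset.range (2 ^ j + 1)).image
      (fun m => g (m * 2 ^ (M - j))) with hPdef
  have hmem : ∀ j, ∀ w : ℝ, w ∈ P j ↔ ∃ m, m ≤ 2 ^ j ∧ g (m * 2 ^ (M - j)) = w := by
    intro j w
    simp only [hPdef, Finset.mem_image, Finset.mem_range, Nat.lt_succ_iff]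
  have hdpos : ∀ j : ℕ, 0 < 2 ^ (M - j) := fun j => Nat.pow_pos two_pos
  have hidx : ∀ j, j ≤ M → 2 ^ j * 2 ^ (M - j) = 2 ^ M := by
    intro j hj; rw [← pow_add]; congr 1; omega
  -- consecutive points of `P j` come from consecutive indices
  have hconsec : ∀ j, j ≤ M → ∀ u ∈ P j, ∀ v ∈ P j, u < v →
      (∀ w ∈ P j, w ∉ Set.Ioo u v) →
      ∃ m, m + 1 ≤ 2 ^ j ∧ u = g (m * 2 ^ (M - j)) ∧ v = g ((m + 1) * 2 ^ (M - j)) := by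
    intro j hj u hu v hv huv hno
    obtain ⟨m, hm, hmu⟩ := (hmem j u).mp hu
    obtain ⟨m', hm', hmv⟩ := (hmem j v).mp hv
    have hmm' : m < m' := by
      have h1 : g (m * 2 ^ (M - j)) < g (m' * 2 ^ (M - j)) := by rw [hmu, hmv]; exact huv
      have h2 := hgmono.lt_iff_lt.mp h1
      exact lt_of_mul_lt_mul_right h2 (Nat.zero_le _)
    have heq : m' = m + 1 := by
      by_contra hne
      have hlt : m + 1 < m' := by omega
      have hw : g ((m + 1) * 2 ^ (M - j)) ∈ P j := (hmem j _).mpr ⟨m + 1, by omega, rfl⟩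
      refine hno _ hw ⟨?_, ?_⟩
      · rw [← hmu]
        exact hgmono ((Nat.mul_lt_mul_right (hdpos j)).mpr (Nat.lt_succ_self m))
      · rw [← hmv]
        exact hgmono ((Nat.mul_lt_mul_right (hdpos j)).mpr hlt)
    exact ⟨m, heq ▸ hm', hmu.symm, by rw [← heq]; exact hmv.symm⟩
  -- mesh bound
  have hmesh : ∀ j, j ≤ M → ∀ m : ℕ,
      g ((m + 1) * 2 ^ (M - j)) - g (m * 2 ^ (M - j)) < 4 / 2 ^ j := by
    intro j hj m
    have h2j : (0:ℝ) < 2 ^ j := pow_pos two_pos j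
    have hpow : (2:ℝ) ^ (M - j) * 2 ^ j = 2 ^ M := by rw [← pow_add]; congr 1; omega
    have hdh : ((2 ^ (M - j) : ℕ) : ℝ) * h = (b - a) / 2 ^ j := by
      push_cast
      rw [hhdef, eq_div_iff h2j.ne']
      field_simp
      linear_combination hpow
    have hd1 : (1:ℝ) ≤ ((2 ^ (M - j) : ℕ) : ℝ) := by
      exact_mod_cast Nat.one_le_two_pow
    have h1 := hglb (m * 2 ^ (M - j))
    have h2 := hgub ((m + 1) * 2 ^ (M - j))
    push_cast at h1 h2
    have key : g ((m + 1) * 2 ^ (M - j)) - g (m * 2 ^ (M - j)) <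
        ((2 ^ (M - j) : ℕ) : ℝ) * h + h := by push_cast; nlinarith
    have hbig : ((2 ^ (M - j) : ℕ) : ℝ) * h + h ≤ 2 * ((b - a) / 2 ^ j) := by
      nlinarith [hh.le]
    have hfin : 2 * ((b - a) / 2 ^ j) < 4 / 2 ^ j := by
      have e : 2 * ((b - a) / 2 ^ j) = (2 * (b - a)) / 2 ^ j := by ring
      rw [e, div_lt_div_iff₀ h2j h2j]
      nlinarith
    linarith
  refine ⟨M, P, ?_, ?_, ?_, ?_, ?_, ?_, ?_⟩
  · -- P 0 = {a, b}
    apply Finset.ext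
    intro w
    rw [hmem 0 w]
    simp only [pow_zero, Nat.sub_zero, Finset.mem_insert, Finset.mem_singleton]
    constructor
    · rintro ⟨m, hm, rfl⟩
      interval_cases m
      · left; rw [zero_mul, hg0]
      · right; rw [one_mul, hgtop]
    · rintro (rfl | rfl)
      · exact ⟨0, by norm_num, by rw [zero_mul, hg0]⟩
      · exact ⟨1, by norm_num, by rw [one_mul, hgtop]⟩
  · -- cardinality
    intro j hj
    rw [hPdef]
    rw [Finset.card_image_of_injective _ ?_, Finset.card_range]
    intro m m' e
    have := hgmono.injective e
    exact Nat.eq_of_mul_eq_mul_right (hdpos j) this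
  · -- inside [a, b]
    intro j hj
    refine ⟨?_, ?_, ?_⟩
    · intro w hw
      obtain ⟨m, hm, rfl⟩ := (hmem j w).mp hw
      constructor
      · calc a = g 0 := hg0.symm
          _ ≤ g (m * 2 ^ (M - j)) := hgmono.monotone (Nat.zero_le _)
      · calc g (m * 2 ^ (M - j)) ≤ g (2 ^ M) := by
              apply hgmono.monotone
              calc m * 2 ^ (M - j) ≤ 2 ^ j * 2 ^ (M - j) := Nat.mul_le_mul_right _ hm
                _ = 2 ^ M := hidx j hj
          _ = b := hgtop
    · exact (hmem j a).mpr ⟨0, Nat.zero_le _, by rw [zero_mul, hg0]⟩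
    · exact (hmem j b).mpr ⟨2 ^ j, le_rfl, by rw [hidx j hj, hgtop]⟩
  · -- nested
    intro j hj w hw
    obtain ⟨m, hm, rfl⟩ := (hmem j w).mp hw
    have hsplit : M - j = (M - (j + 1)) + 1 := by omega
    have hdd : 2 ^ (M - j) = 2 * 2 ^ (M - (j + 1)) := by
      rw [hsplit, pow_succ]; ring
    have i1 : m * 2 ^ (M - j) = 2 * m * 2 ^ (M - (j + 1)) := by rw [hdd]; ring
    rw [i1]
    refine (hmem (j + 1) _).mpr ⟨2 * m, ?_, rfl⟩
    have : 2 ^ (j + 1) = 2 * 2 ^ j := by rw [pow_succ]; ring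
    omega
  · -- unique insertion
    intro j hj u hu v hv huv hno
    obtain ⟨m, hm1, hu', hv'⟩ := hconsec j hj.le u hu v hv huv hno
    have hsplit : M - j = (M - (j + 1)) + 1 := by omega
    have hdd : 2 ^ (M - j) = 2 * 2 ^ (M - (j + 1)) := by
      rw [hsplit, pow_succ]; ring
    have hd'pos : 0 < 2 ^ (M - (j + 1)) := hdpos (j + 1)
    have h2j1 : 2 ^ (j + 1) = 2 * 2 ^ j := by rw [pow_succ]; ring
    have i1 : m * 2 ^ (M - j) = 2 * m * 2 ^ (M - (j + 1)) := by rw [hdd]; ring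
    have i2 : (m + 1) * 2 ^ (M - j) = (2 * m + 2) * 2 ^ (M - (j + 1)) := by rw [hdd]; ring
    have hueq : u = g (2 * m * 2 ^ (M - (j + 1))) := by rw [hu', i1]
    have hveq : v = g ((2 * m + 2) * 2 ^ (M - (j + 1))) := by rw [hv', i2]
    refine ⟨g ((2 * m + 1) * 2 ^ (M - (j + 1))), ⟨?_, ?_, ?_⟩, ?_⟩
    · exact (hmem (j + 1) _).mpr ⟨2 * m + 1, by omega, rfl⟩
    · rw [hueq]
      exact hgmono ((Nat.mul_lt_mul_right hd'pos).mpr (by omega))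
    · rw [hveq]
      exact hgmono ((Nat.mul_lt_mul_right hd'pos).mpr (by omega))
    · rintro w' ⟨hw', hw1, hw2⟩
      obtain ⟨m'', hm'', rfl⟩ := (hmem (j + 1) w').mp hw'
      rw [hueq] at hw1
      rw [hveq] at hw2
      have e1 : 2 * m < m'' :=
        lt_of_mul_lt_mul_right (hgmono.lt_iff_lt.mp hw1) (Nat.zero_le _)
      have e2 : m'' < 2 * m + 2 :=
        lt_of_mul_lt_mul_right (hgmono.lt_iff_lt.mp hw2) (Nat.zero_le _)
      have : m'' = 2 * m + 1 := by omega
      rw [this]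
  · -- mesh
    intro j hj u hu v hv huv hno
    obtain ⟨m, hm1, hu', hv'⟩ := hconsec j hj u hu v hv huv hno
    rw [hu', hv']
    exact hmesh j hj m
  · -- refinement
    intro i
    refine (hmem M (x i)).mpr ⟨k i, ?_, ?_⟩
    · calc k i ≤ k (Fin.last (N + 1)) := hkmono.monotone (Fin.le_last i)
        _ = 2 ^ M := hkN
    · rw [Nat.sub_self, pow_zero, mul_one, hg_spec]
end
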